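/- Soundness of a logical relation for termination-observation equivalence in F: if two closed terms of type int are related by a step-indexed logical relation at all step indices, then plugging them into any well-typed closing context yields programs that co-terminate; hence logical relatedness implies contextual equivalence. -/

import Mathlib

/-! Core formalization of the functional language F from "FunTAL: Reasonably
Mixing a Functional Language with Assembly": simply-typed call-by-value
language with unit, integers, arithmetic primitives, test-if-zero,
functions, iso-recursive types (fold/unfold) and tuples with projection.
De Bruijn indices are used for term and type variables. -/

namespace FunTAL

/-- F types. `mu` binds type variable 0 (de Bruijn). -/
inductive Ty : Type
  | tvar : ℕ → Ty
  | unit : Ty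
  | int : Ty
  | arrow : Ty → Ty → Ty
  | mu : Ty → Ty
  | prod : List Ty → Ty

-- Substitution of a (closed) type `u` for type variable `k`.
mutual
def substTy (u : Ty) : ℕ → Ty → Ty
  | k, .tvar n => if n = k then u else if k < n then .tvar (n-1) else .tvar n
  | _, .unit => .unit
  | _, .int => .int
  | k, .arrow t1 t2 => .arrow (substTy u k t1) (substTy u k t2)
  | k, .mu t => .mu (substTy u (k+1) t)
  | k, .prod ts => .prod (substTyList u k ts)
def substTyList (u : Ty) : ℕ → List Ty → List Ty
  | _, [] => []
  | k, t :: ts => substTy u k t :: substTyList u k ts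
end

/-- Arithmetic primitives. -/
inductive Prim : Type
  | add | sub | mul
deriving DecidableEq

def Prim.denote : Prim → ℤ → ℤ → ℤ
  | .add, a, b => a + b
  | .sub, a, b => a - b
  | .mul, a, b => a * b

/-- F expressions (de Bruijn indices for term variables). -/
inductive Exp : Type
  | var : ℕ → Exp
  | unit : Exp
  | int : ℤ → Exp
  | prim : Prim → Exp → Exp → Exp
  | if0 : Exp → Exp → Exp → Exp
  | lam : Ty → Exp → Exp
  | app : Exp → Exp → Exp
  | fold : Ty → Exp → Exp
  | unfold : Exp → Exp
  | tuple : List Exp → Exp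
  | proj : ℕ → Exp → Exp

/-- Values: unit, integers, lambdas, fold of a value, tuples of values. -/
inductive Value : Exp → Prop
  | unit : Value .unit
  | int : ∀ n, Value (.int n)
  | lam : ∀ τ b, Value (.lam τ b)
  | fold : ∀ τ v, Value v → Value (.fold τ v)
  | tuple : ∀ vs, (∀ v ∈ vs, Value v) → Value (.tuple vs)

-- Capture-avoiding substitution of a closed value `u` for variable `k`.
mutual
def subst (u : Exp) : ℕ → Exp → Exp
  | k, .var n => if n = k then u else if k < n then .var (n-1) else .var n
  | _, .unit => .unit
  | _, .int n => .int n
  | k, .prim p e1 e2 => .prim p (subst u k e1) (subst u k e2)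
  | k, .if0 e e1 e2 => .if0 (subst u k e) (subst u k e1) (subst u k e2)
  | k, .lam τ b => .lam τ (subst u (k+1) b)
  | k, .app e1 e2 => .app (subst u k e1) (subst u k e2)
  | k, .fold τ e => .fold τ (subst u k e)
  | k, .unfold e => .unfold (subst u k e)
  | k, .tuple es => .tuple (substList u k es)
  | k, .proj i e => .proj i (subst u k e)
def substList (u : Exp) : ℕ → List Exp → List Exp
  | _, [] => []
  | k, e :: es => subst u k e :: substList u k es
end

-- The typing judgment Γ ⊢ e : τ.
mutual
inductive HasType : List Ty → Exp → Ty → Prop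
  | var : ∀ {Γ n τ}, Γ[n]? = some τ → HasType Γ (.var n) τ
  | unit : ∀ {Γ}, HasType Γ .unit .unit
  | int : ∀ {Γ n}, HasType Γ (.int n) .int
  | prim : ∀ {Γ p e1 e2}, HasType Γ e1 .int → HasType Γ e2 .int →
      HasType Γ (.prim p e1 e2) .int
  | if0 : ∀ {Γ e e1 e2 τ}, HasType Γ e .int → HasType Γ e1 τ → HasType Γ e2 τ →
      HasType Γ (.if0 e e1 e2) τ
  | lam : ∀ {Γ τ1 b τ2}, HasType (τ1 :: Γ) b τ2 →
      HasType Γ (.lam τ1 b) (.arrow τ1 τ2)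
  | app : ∀ {Γ e1 e2 τ1 τ2}, HasType Γ e1 (.arrow τ1 τ2) → HasType Γ e2 τ1 →
      HasType Γ (.app e1 e2) τ2
  | fold : ∀ {Γ e τ}, HasType Γ e (substTy (.mu τ) 0 τ) →
      HasType Γ (.fold (.mu τ) e) (.mu τ)
  | unfold : ∀ {Γ e τ}, HasType Γ e (.mu τ) →
      HasType Γ (.unfold e) (substTy (.mu τ) 0 τ)
  | tuple : ∀ {Γ es τs}, HasTypeList Γ es τs → HasType Γ (.tuple es) (.prod τs)
  | proj : ∀ {Γ e τs i τ}, HasType Γ e (.prod τs) → τs[i]? = some τ →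
      HasType Γ (.proj i e) τ
inductive HasTypeList : List Ty → List Exp → List Ty → Prop
  | nil : ∀ {Γ}, HasTypeList Γ [] []
  | cons : ∀ {Γ e τ es τs}, HasType Γ e τ → HasTypeList Γ es τs →
      HasTypeList Γ (e :: es) (τ :: τs)
end

/-- Evaluation contexts enforcing left-to-right call-by-value evaluation. -/
inductive ECtx : Type
  | hole : ECtx
  | prim1 : Prim → ECtx → Exp → ECtx
  | prim2 : Prim → ∀ v : Exp, Value v → ECtx → ECtx
  | if0C : ECtx → Exp → Exp → ECtx
  | app1 : ECtx → Exp → ECtx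
  | app2 : ∀ v : Exp, Value v → ECtx → ECtx
  | foldC : Ty → ECtx → ECtx
  | unfoldC : ECtx → ECtx
  | tupleC : ∀ vs : List Exp, (∀ v ∈ vs, Value v) → ECtx → List Exp → ECtx
  | projC : ℕ → ECtx → ECtx

/-- Plugging an expression into an evaluation context. -/
def plug : ECtx → Exp → Exp
  | .hole, e => e
  | .prim1 p E e2, e => .prim p (plug E e) e2
  | .prim2 p v _ E, e => .prim p v (plug E e)
  | .if0C E e1 e2, e => .if0 (plug E e) e1 e2
  | .app1 E e2, e => .app (plug E e) e2
  | .app2 v _ E, e => .app v (plug E e)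
  | .foldC τ E, e => .fold τ (plug E e)
  | .unfoldC E, e => .unfold (plug E e)
  | .tupleC vs _ E es, e => .tuple (vs ++ plug E e :: es)
  | .projC i E, e => .proj i (plug E e)

/-- Primitive reduction steps (redex contractions). -/
inductive HeadStep : Exp → Exp → Prop
  | beta : ∀ τ b v, Value v → HeadStep (.app (.lam τ b) v) (subst v 0 b)
  | prim : ∀ p n1 n2, HeadStep (.prim p (.int n1) (.int n2)) (.int (p.denote n1 n2))
  | if0_true : ∀ e1 e2, HeadStep (.if0 (.int 0) e1 e2) e1
  | if0_false : ∀ n e1 e2, n ≠ 0 → HeadStep (.if0 (.int n) e1 e2) e2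
  | unfold_fold : ∀ τ v, Value v → HeadStep (.unfold (.fold τ v)) v
  | proj : ∀ vs i v, (∀ w ∈ vs, Value w) → vs[i]? = some v →
      HeadStep (.proj i (.tuple vs)) v

/-- A redex is an expression that can take a primitive reduction step. -/
def Redex (e : Exp) : Prop := ∃ e', HeadStep e e'

/-- The small-step call-by-value operational semantics: reduce a redex
inside an evaluation context. -/
inductive Step : Exp → Exp → Prop
  | mk : ∀ (E : ECtx) (r r' : Exp), HeadStep r r' → Step (plug E r) (plug E r')


/-- `e` reduces to `e'` in exactly `j` steps. -/
inductive StepN : ℕ → Exp → Exp → Prop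
  | refl : ∀ e, StepN 0 e e
  | step : ∀ {j e e' e''}, Step e e' → StepN j e' e'' → StepN (j+1) e e''

/-- Multi-step reduction. -/
def Steps : Exp → Exp → Prop := Relation.ReflTransGen Step

/-- `e` evaluates to the value `v`. -/
def Evaluates (e v : Exp) : Prop := Steps e v ∧ Value v

/-- The step-indexed logical relation at type `int`: equality of integer
results under termination, approximated to step index `k` — if `e1`
evaluates to an integer literal within `k` steps then `e2` evaluates to the
same integer literal. -/
def LRint (k : ℕ) (e1 e2 : Exp) : Prop :=
  ∀ j ≤ k, ∀ n : ℤ, StepN j e1 (.int n) → Steps e2 (.int n)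
/-! ### Auxiliary development -/

-- Basic facts about Steps/StepN
theorem stepN_steps {j e e'} (h : StepN j e e') : Steps e e' := by
  induction h with
  | refl => exact .refl
  | step h _ ih => exact .head h ih

theorem stepN_snoc {j e e' e''} (h : StepN j e e') (h2 : Step e' e'') :
    StepN (j+1) e e'' := by
  induction h with
  | refl => exact .step h2 (.refl _)
  | step h1 _ ih => exact .step h1 (ih h2)

theorem steps_stepN {e e'} (h : Steps e e') : ∃ j, StepN j e e' := by
  induction h with
  | refl => exact ⟨0, .refl _⟩
  | tail _ h2 ih => exact ⟨ih.choose + 1, stepN_snoc ih.choose_spec h2⟩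

/-- Composition of evaluation contexts. -/
def ecomp : ECtx → ECtx → ECtx
  | .hole, F => F
  | .prim1 p E e2, F => .prim1 p (ecomp E F) e2
  | .prim2 p v hv E, F => .prim2 p v hv (ecomp E F)
  | .if0C E a b, F => .if0C (ecomp E F) a b
  | .app1 E e2, F => .app1 (ecomp E F) e2
  | .app2 v hv E, F => .app2 v hv (ecomp E F)
  | .foldC τ E, F => .foldC τ (ecomp E F)
  | .unfoldC E, F => .unfoldC (ecomp E F)
  | .tupleC vs hvs E es, F => .tupleC vs hvs (ecomp E F) es
  | .projC i E, F => .projC i (ecomp E F)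

theorem plug_ecomp (E F : ECtx) (e : Exp) : plug (ecomp E F) e = plug E (plug F e) := by
  induction E <;> simp [ecomp, plug, *]

theorem step_plug {e e'} (E : ECtx) (h : Step e e') : Step (plug E e) (plug E e') := by
  cases h with
  | mk F r r' hh =>
    rw [← plug_ecomp, ← plug_ecomp]
    exact .mk _ _ _ hh

theorem steps_plug {e e'} (E : ECtx) (h : Steps e e') : Steps (plug E e) (plug E e') :=
  Relation.ReflTransGen.lift (r := Step) (p := Step) (plug E) (fun _ _ hs => step_plug E hs) _ _ h

theorem step1 {r r'} (h : HeadStep r r') : Step r r' := Step.mk .hole r r' h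

-- Weakening
mutual
theorem hasType_wk (Δ : List Ty) : ∀ {Γ e τ}, HasType Γ e τ → HasType (Γ ++ Δ) e τ
  | _, _, _, h => by
    cases h with
    | var hn => exact .var (by rw [List.getElem?_append_left (List.getElem?_eq_some_iff.mp hn).1]; exact hn)
    | unit => exact .unit
    | int => exact .int
    | prim h1 h2 => exact .prim (hasType_wk Δ h1) (hasType_wk Δ h2)
    | if0 h h1 h2 => exact .if0 (hasType_wk Δ h) (hasType_wk Δ h1) (hasType_wk Δ h2)
    | lam h => exact .lam (hasType_wk Δ h)
    | app h1 h2 => exact .app (hasType_wk Δ h1) (hasType_wk Δ h2)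
    | fold h => exact .fold (hasType_wk Δ h)
    | unfold h => exact .unfold (hasType_wk Δ h)
    | tuple h => exact .tuple (hasTypeList_wk Δ h)
    | proj h hi => exact .proj (hasType_wk Δ h) hi
theorem hasTypeList_wk (Δ : List Ty) : ∀ {Γ es τs}, HasTypeList Γ es τs → HasTypeList (Γ ++ Δ) es τs
  | _, _, _, .nil => .nil
  | _, _, _, .cons h hs => .cons (hasType_wk Δ h) (hasTypeList_wk Δ hs)
end

-- Substituting above all free variables is the identity.
mutual
theorem subst_closed (u : Exp) : ∀ {Γ e τ} (k : ℕ), HasType Γ e τ → Γ.length ≤ k →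
    subst u k e = e
  | _, _, _, k, h, hk => by
    cases h with
    | @var _ n _ hn =>
      have hlt : n < _ := (List.getElem?_eq_some_iff.mp hn).1
      have h1 : ¬ n = k := by omega
      have h2 : ¬ k < n := by omega
      simp [subst, h1, h2]
    | unit => rfl
    | int => rfl
    | prim h1 h2 => simp only [subst]; rw [subst_closed u k h1 hk, subst_closed u k h2 hk]
    | if0 h h1 h2 =>
        simp only [subst]
        rw [subst_closed u k h hk, subst_closed u k h1 hk, subst_closed u k h2 hk]
    | lam h => simp only [subst]; rw [subst_closed u (k+1) h (by simpa using Nat.succ_le_succ hk)]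
    | app h1 h2 => simp only [subst]; rw [subst_closed u k h1 hk, subst_closed u k h2 hk]
    | fold h => simp only [subst]; rw [subst_closed u k h hk]
    | unfold h => simp only [subst]; rw [subst_closed u k h hk]
    | tuple h => simp only [subst]; rw [substList_closed u k h hk]
    | proj h hi => simp only [subst]; rw [subst_closed u k h hk]
theorem substList_closed (u : Exp) : ∀ {Γ es τs} (k : ℕ), HasTypeList Γ es τs → Γ.length ≤ k →
    substList u k es = es
  | _, _, _, _, .nil, _ => rfl
  | _, _, _, k, .cons h hs, hk => by
    simp only [substList]; rw [subst_closed u k h hk, substList_closed u k hs hk]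
end

-- Substitution lemma
mutual
theorem subst_typing {u τ'} (hu : HasType [] u τ') :
    ∀ {Γ1 e τ}, HasType (Γ1 ++ [τ']) e τ → HasType Γ1 (subst u Γ1.length e) τ
  | Γ1, _, τ0, h => by
    cases h with
    | @var _ n _ hn =>
      rcases Nat.lt_trichotomy n Γ1.length with hlt | heq | hgt
      · have h1 : ¬ n = Γ1.length := by omega
        have h2 : ¬ Γ1.length < n := by omega
        simp only [subst, h1, h2, if_false]
        refine .var ?_
        rw [List.getElem?_append_left hlt] at hn
        exact hn
      · have hn' : τ' = τ0 := by
          rw [heq] at hn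
          rw [List.getElem?_append_right (le_refl _)] at hn
          simpa using hn
        simp only [subst, heq, if_pos rfl]
        cases hn'
        exact hasType_wk Γ1 hu
      · exfalso
        have : (Γ1 ++ [τ']).length ≤ n := by simp; omega
        rw [List.getElem?_eq_none this] at hn
        cases hn
    | unit => exact .unit
    | int => exact .int
    | prim h1 h2 => exact .prim (subst_typing hu h1) (subst_typing hu h2)
    | if0 h h1 h2 => exact .if0 (subst_typing hu h) (subst_typing hu h1) (subst_typing hu h2)
    | @lam _ τ1 b τ2 h =>
      refine .lam ?_
      have := subst_typing hu (Γ1 := τ1 :: Γ1) h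
      simpa using this
    | app h1 h2 => exact .app (subst_typing hu h1) (subst_typing hu h2)
    | fold h => exact .fold (subst_typing hu h)
    | unfold h => exact .unfold (subst_typing hu h)
    | tuple h => exact .tuple (substList_typing hu h)
    | proj h hi => exact .proj (subst_typing hu h) hi
theorem substList_typing {u τ'} (hu : HasType [] u τ') :
    ∀ {Γ1 es τs}, HasTypeList (Γ1 ++ [τ']) es τs → HasTypeList Γ1 (substList u Γ1.length es) τs
  | _, _, _, .nil => .nil
  | _, _, _, .cons h hs => .cons (subst_typing hu h) (substList_typing hu hs)
end

-- List typing helpers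
theorem hasTypeList_append_inv : ∀ {Γ} (xs : List Exp) {y zs τs},
    HasTypeList Γ (xs ++ y :: zs) τs →
    ∃ τs1 σ τs2, τs = τs1 ++ σ :: τs2 ∧ HasTypeList Γ xs τs1 ∧ HasType Γ y σ ∧
      HasTypeList Γ zs τs2
  | Γ, [], y, zs, τs, h => by
    cases h with
    | cons h hs => exact ⟨[], _, _, rfl, .nil, h, hs⟩
  | Γ, x :: xs, y, zs, τs, h => by
    cases h with
    | cons h hs =>
      obtain ⟨τs1, σ, τs2, rfl, h1, h2, h3⟩ := hasTypeList_append_inv xs hs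
      exact ⟨_ :: τs1, σ, τs2, rfl, .cons h h1, h2, h3⟩

theorem hasTypeList_append : ∀ {Γ xs τs1 ys τs2}, HasTypeList Γ xs τs1 →
    HasTypeList Γ ys τs2 → HasTypeList Γ (xs ++ ys) (τs1 ++ τs2)
  | _, _, _, _, _, .nil, h2 => h2
  | _, _, _, _, _, .cons h hs, h2 => .cons h (hasTypeList_append hs h2)

theorem hasTypeList_get : ∀ {Γ es τs}, HasTypeList Γ es τs → ∀ {i : ℕ} {e τ},
    es[i]? = some e → τs[i]? = some τ → HasType Γ e τ
  | _, _, _, .nil, i, _, _, he, _ => by simp at he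
  | _, _, _, .cons h hs, i, _, _, he, hτ => by
    cases i with
    | zero => simp at he hτ; rw [← he, ← hτ]; exact h
    | succ i => exact hasTypeList_get hs (by simpa using he) (by simpa using hτ)

-- Decomposition of typing along evaluation contexts
theorem plug_typing : ∀ (E : ECtx) {e τ}, HasType [] (plug E e) τ →
    ∃ σ, HasType [] e σ ∧ ∀ e', HasType [] e' σ → HasType [] (plug E e') τ
  | .hole, e, τ, h => ⟨τ, h, fun _ h' => h'⟩
  | .prim1 p E e2, e, τ, h => by
    cases h with
    | prim h1 h2 =>
      obtain ⟨σ, hσ, hre⟩ := plug_typing E h1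
      exact ⟨σ, hσ, fun e' h' => .prim (hre e' h') h2⟩
  | .prim2 p v hv E, e, τ, h => by
    cases h with
    | prim h1 h2 =>
      obtain ⟨σ, hσ, hre⟩ := plug_typing E h2
      exact ⟨σ, hσ, fun e' h' => .prim h1 (hre e' h')⟩
  | .if0C E a b, e, τ, h => by
    cases h with
    | if0 h h1 h2 =>
      obtain ⟨σ, hσ, hre⟩ := plug_typing E h
      exact ⟨σ, hσ, fun e' h' => .if0 (hre e' h') h1 h2⟩
  | .app1 E e2, e, τ, h => by
    cases h with
    | app h1 h2 =>
      obtain ⟨σ, hσ, hre⟩ := plug_typing E h1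
      exact ⟨σ, hσ, fun e' h' => .app (hre e' h') h2⟩
  | .app2 v hv E, e, τ, h => by
    cases h with
    | app h1 h2 =>
      obtain ⟨σ, hσ, hre⟩ := plug_typing E h2
      exact ⟨σ, hσ, fun e' h' => .app h1 (hre e' h')⟩
  | .foldC τ0 E, e, τ, h => by
    cases h with
    | fold h =>
      obtain ⟨σ, hσ, hre⟩ := plug_typing E h
      exact ⟨σ, hσ, fun e' h' => .fold (hre e' h')⟩
  | .unfoldC E, e, τ, h => by
    cases h with
    | unfold h =>
      obtain ⟨σ, hσ, hre⟩ := plug_typing E h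
      exact ⟨σ, hσ, fun e' h' => .unfold (hre e' h')⟩
  | .tupleC vs hvs E es, e, τ, h => by
    cases h with
    | tuple h =>
      obtain ⟨τs1, σ0, τs2, rfl, h1, h2, h3⟩ := hasTypeList_append_inv vs h
      obtain ⟨σ, hσ, hre⟩ := plug_typing E h2
      exact ⟨σ, hσ, fun e' h' => .tuple (hasTypeList_append h1 (.cons (hre e' h') h3))⟩
  | .projC i E, e, τ, h => by
    cases h with
    | proj h hi =>
      obtain ⟨σ, hσ, hre⟩ := plug_typing E h
      exact ⟨σ, hσ, fun e' h' => .proj (hre e' h') hi⟩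

theorem head_preservation {r r' σ} (h : HeadStep r r') (ht : HasType [] r σ) :
    HasType [] r' σ := by
  cases h with
  | beta τ b v hv =>
    cases ht with
    | app h1 h2 =>
      cases h1 with
      | lam hb => exact subst_typing h2 (Γ1 := []) hb
  | prim p n1 n2 =>
    cases ht with
    | prim h1 h2 => exact .int
  | if0_true e1 e2 =>
    cases ht with
    | if0 h h1 h2 => exact h1
  | if0_false n e1 e2 hn =>
    cases ht with
    | if0 h h1 h2 => exact h2
  | unfold_fold τ v hv =>
    cases ht with
    | unfold h =>
      cases h with
      | fold h => exact h
  | proj vs i v hvs hi =>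
    cases ht with
    | proj h hτ =>
      cases h with
      | tuple h => exact hasTypeList_get h hi hτ

theorem preservation {e e' τ} (h : Step e e') (ht : HasType [] e τ) : HasType [] e' τ := by
  cases h with
  | mk E r r' hh =>
    obtain ⟨σ, hσ, hre⟩ := plug_typing E ht
    exact hre _ (head_preservation hh hσ)

theorem preservation_steps {e e' τ} (h : Steps e e') (ht : HasType [] e τ) :
    HasType [] e' τ := by
  induction h with
  | refl => exact ht
  | tail _ h2 ih => exact preservation h2 ih

theorem value_int {v} (hv : Value v) (ht : HasType [] v .int) : ∃ n, v = .int n := by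
  cases hv <;> cases ht
  exact ⟨_, rfl⟩

/-! ### The simulation relation -/

mutual
/-- Congruence closure of the pair (reduct of `e1`, `e2`). -/
inductive Sim (e1 e2 : Exp) : Exp → Exp → Prop
  | base : ∀ {p}, Steps e1 p → Sim e1 e2 p e2
  | var : ∀ n, Sim e1 e2 (.var n) (.var n)
  | unit : Sim e1 e2 .unit .unit
  | int : ∀ n, Sim e1 e2 (.int n) (.int n)
  | prim : ∀ (p : Prim) {a a' b b'}, Sim e1 e2 a a' → Sim e1 e2 b b' →
      Sim e1 e2 (.prim p a b) (.prim p a' b')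
  | if0 : ∀ {c c' a a' b b'}, Sim e1 e2 c c' → Sim e1 e2 a a' → Sim e1 e2 b b' →
      Sim e1 e2 (.if0 c a b) (.if0 c' a' b')
  | lam : ∀ (τ) {b b'}, Sim e1 e2 b b' → Sim e1 e2 (.lam τ b) (.lam τ b')
  | app : ∀ {a a' b b'}, Sim e1 e2 a a' → Sim e1 e2 b b' →
      Sim e1 e2 (.app a b) (.app a' b')
  | fold : ∀ (τ) {a a'}, Sim e1 e2 a a' → Sim e1 e2 (.fold τ a) (.fold τ a')
  | unfold : ∀ {a a'}, Sim e1 e2 a a' → Sim e1 e2 (.unfold a) (.unfold a')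
  | tuple : ∀ {es es'}, SimList e1 e2 es es' → Sim e1 e2 (.tuple es) (.tuple es')
  | proj : ∀ (i : ℕ) {a a'}, Sim e1 e2 a a' → Sim e1 e2 (.proj i a) (.proj i a')
inductive SimList (e1 e2 : Exp) : List Exp → List Exp → Prop
  | nil : SimList e1 e2 [] []
  | cons : ∀ {a b es es'}, Sim e1 e2 a b → SimList e1 e2 es es' →
      SimList e1 e2 (a :: es) (b :: es')
end

variable {e1 e2 : Exp}

theorem steps_int (hrel : ∀ k, LRint k e1 e2) {n : ℤ} (h : Steps e1 (.int n)) :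
    Steps e2 (.int n) := by
  obtain ⟨j, hj⟩ := steps_stepN h
  exact hrel j j le_rfl n hj

theorem sim_int_steps (hrel : ∀ k, LRint k e1 e2) {n : ℤ} {c}
    (h : Sim e1 e2 (.int n) c) : Steps c (.int n) := by
  cases h with
  | base hp => exact steps_int hrel hp
  | int => exact .refl

-- Sim is closed under substitution of Sim-related pairs.
mutual
theorem sim_subst (he1 : HasType [] e1 .int) (he2 : HasType [] e2 .int)
    {v w} (hvw : Sim e1 e2 v w) :
    ∀ {a b} (k : ℕ), Sim e1 e2 a b → Sim e1 e2 (subst v k a) (subst w k b)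
  | _, _, k, h => by
    cases h with
    | base hp =>
      rw [subst_closed v k (preservation_steps hp he1) (by simp),
          subst_closed w k he2 (by simp)]
      exact .base hp
    | var n =>
      simp only [subst]
      split_ifs with h1 h2
      · exact hvw
      · exact .var _
      · exact .var _
    | unit => exact .unit
    | int n => exact .int n
    | prim p ha hb =>
      simp only [subst]
      exact .prim p (sim_subst he1 he2 hvw k ha) (sim_subst he1 he2 hvw k hb)
    | if0 hc ha hb =>
      simp only [subst]
      exact .if0 (sim_subst he1 he2 hvw k hc) (sim_subst he1 he2 hvw k ha)
        (sim_subst he1 he2 hvw k hb)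
    | lam τ hb =>
      simp only [subst]
      exact .lam τ (sim_subst he1 he2 hvw (k+1) hb)
    | app ha hb =>
      simp only [subst]
      exact .app (sim_subst he1 he2 hvw k ha) (sim_subst he1 he2 hvw k hb)
    | fold τ ha =>
      simp only [subst]
      exact .fold τ (sim_subst he1 he2 hvw k ha)
    | unfold ha =>
      simp only [subst]
      exact .unfold (sim_subst he1 he2 hvw k ha)
    | tuple hs =>
      simp only [subst]
      exact .tuple (sim_subst_list he1 he2 hvw k hs)
    | proj i ha =>
      simp only [subst]
      exact .proj i (sim_subst he1 he2 hvw k ha)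
theorem sim_subst_list (he1 : HasType [] e1 .int) (he2 : HasType [] e2 .int)
    {v w} (hvw : Sim e1 e2 v w) :
    ∀ {as bs} (k : ℕ), SimList e1 e2 as bs →
      SimList e1 e2 (substList v k as) (substList w k bs)
  | _, _, _, .nil => .nil
  | _, _, k, .cons h hs => by
    simp only [substList]
    exact .cons (sim_subst he1 he2 hvw k h) (sim_subst_list he1 he2 hvw k hs)
end

-- list helpers for Sim
theorem simList_append : ∀ {xs ys zs ws}, SimList e1 e2 xs ys → SimList e1 e2 zs ws →
    SimList e1 e2 (xs ++ zs) (ys ++ ws)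
  | _, _, _, _, .nil, h2 => h2
  | _, _, _, _, .cons h hs, h2 => .cons h (simList_append hs h2)

theorem simList_append_cons : ∀ (xs : List Exp) {y zs cs},
    SimList e1 e2 (xs ++ y :: zs) cs →
    ∃ cs1 c cs2, cs = cs1 ++ c :: cs2 ∧ SimList e1 e2 xs cs1 ∧ Sim e1 e2 y c ∧
      SimList e1 e2 zs cs2
  | [], y, zs, cs, h => by
    cases h with
    | cons h hs => exact ⟨[], _, _, rfl, .nil, h, hs⟩
  | x :: xs, y, zs, cs, h => by
    cases h with
    | cons h hs =>
      obtain ⟨cs1, c, cs2, rfl, h1, h2, h3⟩ := simList_append_cons xs hs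
      exact ⟨_ :: cs1, c, cs2, rfl, .cons h h1, h2, h3⟩

theorem simList_get : ∀ {vs ws}, SimList e1 e2 vs ws → ∀ {i : ℕ} {v},
    vs[i]? = some v → ∃ w, ws[i]? = some w ∧ Sim e1 e2 v w
  | _, _, .nil, i, _, hv => by simp at hv
  | _, _, .cons h hs, i, _, hv => by
    cases i with
    | zero => simp at hv; exact ⟨_, by simp, hv ▸ h⟩
    | succ i =>
      obtain ⟨w, hw1, hw2⟩ := simList_get hs (by simpa using hv)
      exact ⟨w, by simpa using hw1, hw2⟩

-- Values on the left force the right side to reduce to a related value.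
theorem sim_list_val : ∀ {vs cs}, SimList e1 e2 vs cs →
    (∀ v ∈ vs, ∀ {c}, Sim e1 e2 v c → ∃ w, Steps c w ∧ Value w ∧ Sim e1 e2 v w) →
    (∀ v ∈ vs, Value v) →
    ∀ (pre : List Exp), (∀ v ∈ pre, Value v) → ∀ (rest : List Exp),
    ∃ ws, Steps (.tuple (pre ++ cs ++ rest)) (.tuple (pre ++ ws ++ rest)) ∧
      (∀ w ∈ ws, Value w) ∧ SimList e1 e2 vs ws
  | _, _, .nil, _, _, pre, hpre, rest => ⟨[], .refl, by simp, .nil⟩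
  | _, _, @SimList.cons _ _ v c vs cs h hs, ih, hvs, pre, hpre, rest => by
    obtain ⟨w, hw1, hw2, hw3⟩ := ih v (by simp) h
    have s1 : Steps (.tuple (pre ++ (c :: cs) ++ rest)) (.tuple (pre ++ (w :: cs) ++ rest)) := by
      have := steps_plug (.tupleC pre hpre .hole (cs ++ rest)) hw1
      simpa [plug] using this
    obtain ⟨ws, s2, hws1, hws2⟩ := sim_list_val hs (fun u hu {c} hc => ih u (by simp [hu]) hc)
      (fun u hu => hvs u (by simp [hu])) (pre ++ [w])
      (by intro u hu; rcases List.mem_append.mp hu with h' | h'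
          · exact hpre u h'
          · simp at h'; subst h'; exact hw2) rest
    refine ⟨w :: ws, .trans s1 ?_, ?_, .cons hw3 hws2⟩
    · simpa [List.append_assoc, Steps] using s2
    · intro u hu
      rcases List.mem_cons.mp hu with h' | h'
      · subst h'; exact hw2
      · exact hws1 u h'

theorem val_sim (he1 : HasType [] e1 .int) (hrel : ∀ k, LRint k e1 e2) :
    ∀ {v}, Value v → ∀ {c}, Sim e1 e2 v c → ∃ w, Steps c w ∧ Value w ∧ Sim e1 e2 v w := by
  intro v hv
  induction hv with
  | unit =>
    intro c hc
    cases hc with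
    | base hp => cases preservation_steps hp he1
    | unit => exact ⟨.unit, .refl, .unit, .unit⟩
  | int n =>
    intro c hc
    cases hc with
    | base hp => exact ⟨.int n, steps_int hrel hp, .int n, .int n⟩
    | int => exact ⟨.int n, .refl, .int n, .int n⟩
  | lam τ b =>
    intro c hc
    cases hc with
    | base hp => cases preservation_steps hp he1
    | lam _ hb => exact ⟨_, .refl, .lam _ _, .lam _ hb⟩
  | fold τ v hv ih =>
    intro c hc
    cases hc with
    | base hp => cases preservation_steps hp he1
    | fold _ ha =>
      obtain ⟨w, hw1, hw2, hw3⟩ := ih ha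
      exact ⟨.fold τ w, by simpa [plug] using steps_plug (.foldC τ .hole) hw1,
        .fold τ w hw2, .fold τ hw3⟩
  | tuple vs hvs ih =>
    intro c hc
    cases hc with
    | base hp => cases preservation_steps hp he1
    | tuple hsl =>
      obtain ⟨ws, h1, h2, h3⟩ := sim_list_val hsl (fun u hu {c} hc => ih u hu hc) hvs [] (by simp) []
      exact ⟨.tuple ws, by simpa using h1, .tuple ws h2, .tuple h3⟩

theorem sim_step (he1 : HasType [] e1 .int) (he2 : HasType [] e2 .int)
    (hrel : ∀ k, LRint k e1 e2) :
    ∀ (E : ECtx) {r r' b}, HeadStep r r' → Sim e1 e2 (plug E r) b →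
      ∃ b', Steps b b' ∧ Sim e1 e2 (plug E r') b'
  | .hole, r, r', b, hh, hsim => by
    simp only [plug] at hsim ⊢
    cases hsim with
    | base hp => exact ⟨e2, .refl, .base (hp.tail (step1 hh))⟩
    | var n => cases hh
    | unit => cases hh
    | int n => cases hh
    | lam τ hb => cases hh
    | fold τ ha => cases hh
    | tuple hsl => cases hh
    | @prim q _ c1 _ c2 h1 h2 =>
      cases hh with
      | prim =>
        rename_i n1 n2
        have s1 := steps_plug (.prim1 q .hole c2) (sim_int_steps hrel h1)
        have s2 := steps_plug (.prim2 q (.int n1) (.int n1) .hole) (sim_int_steps hrel h2)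
        simp only [plug] at s1 s2
        exact ⟨_, (s1.trans s2).tail (step1 (.prim q _ _)), .int _⟩
    | @if0 _ cc _ ca _ cb h h1 h2 =>
      cases hh with
      | if0_true =>
        have s := steps_plug (.if0C .hole ca cb) (sim_int_steps hrel h)
        simp only [plug] at s
        exact ⟨_, s.tail (step1 (.if0_true _ _)), h1⟩
      | if0_false =>
        rename_i hn
        have s := steps_plug (.if0C .hole ca cb) (sim_int_steps hrel h)
        simp only [plug] at s
        exact ⟨_, s.tail (step1 (.if0_false _ _ _ hn)), h2⟩
    | app h1 h2 =>
      cases hh with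
      | beta =>
        rename_i τl bl hv
        cases h1 with
        | base hp1 => cases preservation_steps hp1 he1
        | @lam _ _ b2 hb =>
          obtain ⟨w, hw1, hw2, hw3⟩ := val_sim he1 hrel hv h2
          refine ⟨subst w 0 b2, ?_, sim_subst he1 he2 hw3 0 hb⟩
          have s := steps_plug (.app2 (.lam τl b2) (.lam τl b2) .hole) hw1
          simp only [plug] at s
          exact s.tail (step1 (.beta τl b2 w hw2))
    | unfold h =>
      cases hh with
      | unfold_fold τf vf hv =>
        cases h with
        | base hp1 => cases preservation_steps hp1 he1
        | fold _ ha =>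
          obtain ⟨w, hw1, hw2, hw3⟩ := val_sim he1 hrel hv ha
          have s := steps_plug (.unfoldC (.foldC τf .hole)) hw1
          simp only [plug] at s
          exact ⟨w, s.tail (step1 (.unfold_fold τf w hw2)), hw3⟩
    | proj i h =>
      cases hh with
      | proj =>
        rename_i vs hvs hi
        cases h with
        | base hp1 => cases preservation_steps hp1 he1
        | tuple hsl =>
          obtain ⟨ws, h1, h2, h3⟩ := sim_list_val hsl
            (fun u hu {c} hc => val_sim he1 hrel (hvs u hu) hc) hvs [] (by simp) []
          obtain ⟨w, hw1, hw2⟩ := simList_get h3 hi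
          have s := steps_plug (.projC i .hole)
            (show Steps (Exp.tuple _) (Exp.tuple ws) by simpa using h1)
          simp only [plug] at s
          exact ⟨w, s.tail (step1 (.proj ws i w h2 hw1)), hw2⟩
  | .prim1 p E ee2, r, r', b, hh, hsim => by
    simp only [plug] at hsim ⊢
    cases hsim with
    | base hp => exact ⟨e2, .refl, .base (hp.tail (Step.mk (.prim1 p E ee2) r r' hh))⟩
    | prim _ h1 h2 =>
      obtain ⟨c1', hs, hsim'⟩ := sim_step he1 he2 hrel E hh h1
      exact ⟨.prim p c1' _, by simpa [plug] using steps_plug (.prim1 p .hole _) hs,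
        .prim p hsim' h2⟩
  | .prim2 p v hv E, r, r', b, hh, hsim => by
    simp only [plug] at hsim ⊢
    cases hsim with
    | base hp => exact ⟨e2, .refl, .base (hp.tail (Step.mk (.prim2 p v hv E) r r' hh))⟩
    | @prim _ _ c1 _ c2 h1 h2 =>
      obtain ⟨w, hw1, hw2, hw3⟩ := val_sim he1 hrel hv h1
      obtain ⟨c2', hs, hsim'⟩ := sim_step he1 he2 hrel E hh h2
      refine ⟨.prim p w c2', Relation.ReflTransGen.trans (b := .prim p w c2) ?_ ?_,
        .prim p hw3 hsim'⟩
      · simpa [plug, Steps] using steps_plug (.prim1 p .hole _) hw1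
      · simpa [plug, Steps] using steps_plug (.prim2 p w hw2 .hole) hs
  | .if0C E a b0, r, r', b, hh, hsim => by
    simp only [plug] at hsim ⊢
    cases hsim with
    | base hp => exact ⟨e2, .refl, .base (hp.tail (Step.mk (.if0C E a b0) r r' hh))⟩
    | if0 h h1 h2 =>
      obtain ⟨c', hs, hsim'⟩ := sim_step he1 he2 hrel E hh h
      exact ⟨.if0 c' _ _, by simpa [plug] using steps_plug (.if0C .hole _ _) hs,
        .if0 hsim' h1 h2⟩
  | .app1 E ee2, r, r', b, hh, hsim => by
    simp only [plug] at hsim ⊢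
    cases hsim with
    | base hp => exact ⟨e2, .refl, .base (hp.tail (Step.mk (.app1 E ee2) r r' hh))⟩
    | app h1 h2 =>
      obtain ⟨c1', hs, hsim'⟩ := sim_step he1 he2 hrel E hh h1
      exact ⟨.app c1' _, by simpa [plug] using steps_plug (.app1 .hole _) hs,
        .app hsim' h2⟩
  | .app2 v hv E, r, r', b, hh, hsim => by
    simp only [plug] at hsim ⊢
    cases hsim with
    | base hp => exact ⟨e2, .refl, .base (hp.tail (Step.mk (.app2 v hv E) r r' hh))⟩
    | @app _ c1 _ c2 h1 h2 =>
      obtain ⟨w, hw1, hw2, hw3⟩ := val_sim he1 hrel hv h1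
      obtain ⟨c2', hs, hsim'⟩ := sim_step he1 he2 hrel E hh h2
      refine ⟨.app w c2', Relation.ReflTransGen.trans (b := .app w c2) ?_ ?_,
        .app hw3 hsim'⟩
      · simpa [plug, Steps] using steps_plug (.app1 .hole _) hw1
      · simpa [plug, Steps] using steps_plug (.app2 w hw2 .hole) hs
  | .foldC τ E, r, r', b, hh, hsim => by
    simp only [plug] at hsim ⊢
    cases hsim with
    | base hp => exact ⟨e2, .refl, .base (hp.tail (Step.mk (.foldC τ E) r r' hh))⟩
    | fold _ ha =>
      obtain ⟨c', hs, hsim'⟩ := sim_step he1 he2 hrel E hh ha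
      exact ⟨.fold τ c', by simpa [plug] using steps_plug (.foldC τ .hole) hs,
        .fold τ hsim'⟩
  | .unfoldC E, r, r', b, hh, hsim => by
    simp only [plug] at hsim ⊢
    cases hsim with
    | base hp => exact ⟨e2, .refl, .base (hp.tail (Step.mk (.unfoldC E) r r' hh))⟩
    | unfold ha =>
      obtain ⟨c', hs, hsim'⟩ := sim_step he1 he2 hrel E hh ha
      exact ⟨.unfold c', by simpa [plug] using steps_plug (.unfoldC .hole) hs,
        .unfold hsim'⟩
  | .tupleC vs hvs E es, r, r', b, hh, hsim => by
    simp only [plug] at hsim ⊢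
    cases hsim with
    | base hp => exact ⟨e2, .refl, .base (hp.tail (Step.mk (.tupleC vs hvs E es) r r' hh))⟩
    | tuple hsl =>
      obtain ⟨cs1, c, cs2, rfl, hA, hB, hC⟩ := simList_append_cons vs hsl
      obtain ⟨ws, hsteps, hwval, hws⟩ := sim_list_val hA
        (fun u hu {c} hc => val_sim he1 hrel (hvs u hu) hc) hvs [] (by simp) (c :: cs2)
      obtain ⟨c', hs, hsim'⟩ := sim_step he1 he2 hrel E hh hB
      refine ⟨.tuple (ws ++ c' :: cs2),
        Relation.ReflTransGen.trans (b := .tuple (ws ++ c :: cs2)) ?_ ?_,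
        .tuple (simList_append hws (.cons hsim' hC))⟩
      · simpa [Steps] using hsteps
      · simpa [plug, Steps] using steps_plug (.tupleC ws hwval .hole cs2) hs
  | .projC i E, r, r', b, hh, hsim => by
    simp only [plug] at hsim ⊢
    cases hsim with
    | base hp => exact ⟨e2, .refl, .base (hp.tail (Step.mk (.projC i E) r r' hh))⟩
    | proj _ ha =>
      obtain ⟨c', hs, hsim'⟩ := sim_step he1 he2 hrel E hh ha
      exact ⟨.proj i c', by simpa [plug] using steps_plug (.projC i .hole) hs,
        .proj i hsim'⟩

theorem sim_step' (he1 : HasType [] e1 .int) (he2 : HasType [] e2 .int)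
    (hrel : ∀ k, LRint k e1 e2) {a a' b} (hsim : Sim e1 e2 a b) (h : Step a a') :
    ∃ b', Steps b b' ∧ Sim e1 e2 a' b' := by
  cases h with
  | mk E r r' hh => exact sim_step he1 he2 hrel E hh hsim

theorem sim_eval (he1 : HasType [] e1 .int) (he2 : HasType [] e2 .int)
    (hrel : ∀ k, LRint k e1 e2) :
    ∀ {j a v b}, StepN j a v → Value v → Sim e1 e2 a b → ∃ w, Steps b w ∧ Value w := by
  intro j a v b hsn
  induction hsn generalizing b with
  | refl =>
    intro hv hsim
    obtain ⟨w, hw1, hw2, _⟩ := val_sim he1 hrel hv hsim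
    exact ⟨w, hw1, hw2⟩
  | step h1 h2 ih =>
    intro hv hsim
    obtain ⟨b', hb1, hb2⟩ := sim_step' he1 he2 hrel hsim h1
    obtain ⟨w, hw1, hw2⟩ := ih hv hb2
    exact ⟨w, hb1.trans hw1, hw2⟩

-- Relating the two instantiations of a context.
mutual
theorem sim_ctx : ∀ {Γ C τ}, HasType Γ C τ → ∀ (k : ℕ),
    Sim e1 e2 (subst e1 k C) (subst e2 k C)
  | _, _, _, h, k => by
    cases h with
    | var hn =>
      simp only [subst]
      split_ifs with h1 h2
      · exact .base .refl
      · exact .var _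
      · exact .var _
    | unit => exact .unit
    | int => exact .int _
    | prim h1 h2 =>
      simp only [subst]
      exact .prim _ (sim_ctx h1 k) (sim_ctx h2 k)
    | if0 h h1 h2 =>
      simp only [subst]
      exact .if0 (sim_ctx h k) (sim_ctx h1 k) (sim_ctx h2 k)
    | lam h =>
      simp only [subst]
      exact .lam _ (sim_ctx h (k+1))
    | app h1 h2 =>
      simp only [subst]
      exact .app (sim_ctx h1 k) (sim_ctx h2 k)
    | fold h =>
      simp only [subst]
      exact .fold _ (sim_ctx h k)
    | unfold h =>
      simp only [subst]
      exact .unfold (sim_ctx h k)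
    | tuple h =>
      simp only [subst]
      exact .tuple (sim_ctx_list h k)
    | proj h hi =>
      simp only [subst]
      exact .proj _ (sim_ctx h k)
theorem sim_ctx_list : ∀ {Γ Cs τs}, HasTypeList Γ Cs τs → ∀ (k : ℕ),
    SimList e1 e2 (substList e1 k Cs) (substList e2 k Cs)
  | _, _, _, .nil, _ => .nil
  | _, _, _, .cons h hs, k => by
    simp only [substList]
    exact .cons (sim_ctx h k) (sim_ctx_list hs k)
end

theorem half (e1 e2 : Exp) (he1 : HasType [] e1 .int) (he2 : HasType [] e2 .int)
    (hrel : ∀ k, LRint k e1 e2) (C : Exp) (τ : Ty) (hC : HasType [.int] C τ) :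
    (∃ v, Evaluates (subst e1 0 C) v) → ∃ v, Evaluates (subst e2 0 C) v := by
  rintro ⟨v, hsteps, hv⟩
  obtain ⟨j, hj⟩ := steps_stepN hsteps
  obtain ⟨w, hw1, hw2⟩ := sim_eval he1 he2 hrel hj hv (sim_ctx hC 0)
  exact ⟨w, hw1, hw2⟩


/-- **Soundness of the logical relation for termination-observation
equivalence**: if two closed terms of type `int` are related by the
step-indexed logical relation at all step indices (in both directions),
then plugging them into any well-typed closing context (represented as a
term with one free variable of type `int`) yields programs that
co-terminate; hence logical relatedness implies contextual equivalence. -/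
theorem lr_sound_for_ctx_equiv (e1 e2 : Exp)
    (ht1 : HasType [] e1 .int) (ht2 : HasType [] e2 .int)
    (hrel : ∀ k, LRint k e1 e2 ∧ LRint k e2 e1) :
    ∀ (C : Exp) (τ : Ty), HasType [.int] C τ →
      ((∃ v, Evaluates (subst e1 0 C) v) ↔ (∃ v, Evaluates (subst e2 0 C) v)) := by
  intro C τ hC
  exact ⟨half e1 e2 ht1 ht2 (fun k => (hrel k).1) C τ hC,
         half e2 e1 ht2 ht1 (fun k => (hrel k).2) C τ hC⟩

end FunTAL
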